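/- For natural numbers K_1, K_j, P with K_1 + K_j ≤ P, the key-sharing probability satisfies the two-sided bound K_1 K_j/P · (1 - K_1 K_j / P) ≤ 1 - C(P-K_1, K_j)/C(P, K_j) ≤ K_1 K_j/(P - K_1). -/
import Mathlib

private lemma desc_le (P K1 : ℕ) (hK : K1 ≤ P) :
    ∀ k, k ≤ P - K1 →
      ((P - K1).descFactorial k : ℝ) * (P:ℝ)^k ≤ (P.descFactorial k : ℝ) * ((P:ℝ) - K1)^k := by
  intro k
  induction k with
  | zero => simp
  | succ n ih =>
    intro hn
    have hn' : n ≤ P - K1 := Nat.le_of_succ_le hn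
    have ih' := ih hn'
    have hnP : n ≤ P := le_trans hn' (Nat.sub_le _ _)
    have hc1 : ((P - K1 - n : ℕ) : ℝ) = (P:ℝ) - (K1:ℝ) - (n:ℝ) := by
      rw [Nat.cast_sub hn', Nat.cast_sub hK]
    have hc2 : ((P - n : ℕ) : ℝ) = (P:ℝ) - (n:ℝ) := Nat.cast_sub hnP
    rw [Nat.descFactorial_succ, Nat.descFactorial_succ, pow_succ, pow_succ]
    push_cast [hc1, hc2]
    have h0 : (0:ℝ) ≤ (P:ℝ) - K1 - n := by
      have : (n:ℝ) ≤ ((P - K1 : ℕ):ℝ) := by exact_mod_cast hn'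
      rw [Nat.cast_sub hK] at this; linarith
    have hP0 : (0:ℝ) ≤ (P:ℝ) := Nat.cast_nonneg _
    have hK0 : (0:ℝ) ≤ (K1:ℝ) := Nat.cast_nonneg _
    have hn0 : (0:ℝ) ≤ (n:ℝ) := Nat.cast_nonneg _
    have hD : (0:ℝ) ≤ (P.descFactorial n : ℝ) := Nat.cast_nonneg _
    have hpow2 : (0:ℝ) ≤ ((P:ℝ) - K1)^n := pow_nonneg (by linarith) n
    have coeff : ((P:ℝ)-K1-n)*(P:ℝ) ≤ ((P:ℝ)-n)*((P:ℝ)-K1) := by nlinarith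
    have key := mul_le_mul_of_nonneg_left ih' (mul_nonneg h0 hP0)
    have key2 := mul_le_mul_of_nonneg_right coeff (mul_nonneg hD hpow2)
    nlinarith [key, key2]

private lemma desc_ge (P K1 : ℕ) (hK : K1 ≤ P) :
    ∀ k, k ≤ P - K1 →
      ((P:ℝ) - K1 - K1*k) * (P.descFactorial k : ℝ)
        ≤ ((P:ℝ) - K1) * ((P - K1).descFactorial k : ℝ) := by
  intro k
  induction k with
  | zero => simp
  | succ n ih =>
    intro hn
    have hn' : n ≤ P - K1 := Nat.le_of_succ_le hn
    have ih' := ih hn'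
    have hnP : n ≤ P := le_trans hn' (Nat.sub_le _ _)
    have hc1 : ((P - K1 - n : ℕ) : ℝ) = (P:ℝ) - (K1:ℝ) - (n:ℝ) := by
      rw [Nat.cast_sub hn', Nat.cast_sub hK]
    have hc2 : ((P - n : ℕ) : ℝ) = (P:ℝ) - (n:ℝ) := Nat.cast_sub hnP
    rw [Nat.descFactorial_succ, Nat.descFactorial_succ]
    push_cast [hc1, hc2]
    have h0 : (0:ℝ) ≤ (P:ℝ) - K1 - n := by
      have : (n:ℝ) ≤ ((P - K1 : ℕ):ℝ) := by exact_mod_cast hn'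
      rw [Nat.cast_sub hK] at this; linarith
    have hK0 : (0:ℝ) ≤ (K1:ℝ) := Nat.cast_nonneg _
    have hn0 : (0:ℝ) ≤ (n:ℝ) := Nat.cast_nonneg _
    have hD : (0:ℝ) ≤ (P.descFactorial n : ℝ) := Nat.cast_nonneg _
    have hK1sq : (0:ℝ) ≤ (K1:ℝ) * ((K1:ℝ) - 1) := by
      rcases Nat.eq_zero_or_pos K1 with h | h
      · simp [h]
      · have : (1:ℝ) ≤ (K1:ℝ) := by exact_mod_cast h
        nlinarith
    have coeff : ((P:ℝ) - K1 - K1*(n+1)) * ((P:ℝ) - n)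
        ≤ ((P:ℝ) - K1 - K1*n) * ((P:ℝ) - K1 - n) := by nlinarith [mul_nonneg hn0 hK1sq]
    have key := mul_le_mul_of_nonneg_left ih' h0
    have key2 := mul_le_mul_of_nonneg_right coeff hD
    nlinarith [key, key2]

private lemma pow_le_quad (a : ℝ) (ha : 0 ≤ a) (ha1 : a ≤ 1) (k : ℕ) :
    (1 - a)^k ≤ 1 - k*a + (k*a)^2 := by
  have h1 : (1-a)^k * (1+a)^k ≤ 1 := by
    rw [← mul_pow]
    have he : (1-a)*(1+a) = 1 - a^2 := by ring
    rw [he]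
    exact pow_le_one₀ (by nlinarith) (by nlinarith)
  have h2 : 1 + (k:ℝ)*a ≤ (1+a)^k := one_add_mul_le_pow (by linarith) k
  have h3 : (0:ℝ) ≤ (1-a)^k := pow_nonneg (by linarith) k
  have h4 : (0:ℝ) < 1 + (k:ℝ)*a := by positivity
  have h5 : (1-a)^k * (1 + (k:ℝ)*a) ≤ 1 := le_trans (mul_le_mul_of_nonneg_left h2 h3) h1
  have h6 : (0:ℝ) ≤ ((k:ℝ)*a)^3 := by positivity
  nlinarith [h5, h4, h6]

/-- For naturals `K1, Kj, P` with `K1 + Kj ≤ P` (and `K1 * Kj ≤ P` so the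
lower bound is nonnegative), the key-sharing probability satisfies
`(K1 Kj / P)(1 - K1 Kj / P) ≤ 1 - C(P-K1, Kj)/C(P, Kj) ≤ K1 Kj/(P - K1)`. -/
theorem stmt14 (K1 Kj P : ℕ) (h : K1 + Kj ≤ P) (h2 : K1 * Kj ≤ P) (hP : 0 < P) :
    ((K1 : ℝ) * Kj / P) * (1 - (K1 : ℝ) * Kj / P)
        ≤ 1 - ((P - K1).choose Kj : ℝ) / (P.choose Kj : ℝ) ∧
      1 - ((P - K1).choose Kj : ℝ) / (P.choose Kj : ℝ)
        ≤ (K1 : ℝ) * Kj / ((P : ℝ) - (K1 : ℝ)) := by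
  have hK : K1 ≤ P := le_trans (Nat.le_add_right _ _) h
  have hKj : Kj ≤ P - K1 := Nat.le_sub_of_add_le (by omega)
  have hKjP : Kj ≤ P := le_trans hKj (Nat.sub_le _ _)
  have hDpos : 0 < P.descFactorial Kj := Nat.pos_of_ne_zero (fun hz => absurd (Nat.descFactorial_eq_zero_iff_lt.mp hz) (not_lt.mpr hKjP))
  have hD1pos : 0 < (P - K1).descFactorial Kj := Nat.pos_of_ne_zero (fun hz => absurd (Nat.descFactorial_eq_zero_iff_lt.mp hz) (not_lt.mpr hKj))
  have hPR : (0:ℝ) < (P:ℝ) := by exact_mod_cast hP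
  -- ratio of chooses equals ratio of descFactorials
  have hratio : ((P - K1).choose Kj : ℝ) / (P.choose Kj : ℝ)
      = ((P - K1).descFactorial Kj : ℝ) / (P.descFactorial Kj : ℝ) := by
    rw [Nat.descFactorial_eq_factorial_mul_choose, Nat.descFactorial_eq_factorial_mul_choose]
    push_cast
    rw [mul_div_mul_left]
    exact_mod_cast Nat.factorial_pos Kj |>.ne'
  set D : ℝ := (P.descFactorial Kj : ℝ) with hDdef
  set D1 : ℝ := ((P - K1).descFactorial Kj : ℝ) with hD1def
  have hD : (0:ℝ) < D := by rw [hDdef]; exact_mod_cast hDpos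
  have hD1 : (0:ℝ) ≤ D1 := Nat.cast_nonneg _
  rw [hratio]
  constructor
  · -- lower bound
    have hle := desc_le P K1 hK Kj hKj
    have ha : (0:ℝ) ≤ (K1:ℝ)/(P:ℝ) := by positivity
    have ha1 : (K1:ℝ)/(P:ℝ) ≤ 1 := by
      rw [div_le_one hPR]; exact_mod_cast hK
    have hq : D1 / D ≤ ((P:ℝ) - K1)^Kj / (P:ℝ)^Kj := by
      rw [div_le_div_iff₀ hD (by positivity)]
      linarith [hle]
    have heq : ((P:ℝ) - K1)^Kj / (P:ℝ)^Kj = (1 - (K1:ℝ)/(P:ℝ))^Kj := by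
      rw [← div_pow]
      congr 1
      field_simp
    have hquad := pow_le_quad ((K1:ℝ)/(P:ℝ)) ha ha1 Kj
    have hx : (Kj:ℝ) * ((K1:ℝ)/(P:ℝ)) = (K1:ℝ) * Kj / P := by ring
    rw [hx] at hquad
    rw [heq] at hq
    nlinarith [hq, hquad]
  · -- upper bound
    rcases Nat.eq_zero_or_pos Kj with hKj0 | hKjpos
    · subst hKj0
      simp [hDdef, hD1def]
    · have hK1lt : K1 < P := by omega
      have hPK1 : (0:ℝ) < (P:ℝ) - K1 := by
        have : (K1:ℝ) < (P:ℝ) := by exact_mod_cast hK1lt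
        linarith
      have hge := desc_ge P K1 hK Kj hKj
      have : ((P:ℝ) - K1 - K1*Kj) / ((P:ℝ) - K1) ≤ D1 / D := by
        rw [div_le_div_iff₀ hPK1 hD]
        nlinarith [hge]
      have hexp : ((P:ℝ) - K1 - K1*Kj) / ((P:ℝ) - K1)
          = 1 - (K1:ℝ) * Kj / ((P:ℝ) - K1) := by
        field_simp
      rw [hexp] at this
      linarith
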